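/- arXiv:2305.18625 — 3 statements merged into one kernel-verified Lean document; each statement's English description precedes it below -/
import Mathlib

section
/- Let q ≥ 2 and let H ≤ (ℤ/qℤ)^× be a subgroup. Then Σ_{a₁, a₂ ∈ H} gcd(a₁ − a₂, q)^{1/2} ≪_ε |H|^{3/2} · q^{1/2 + ε} for every ε > 0, where a₁ − a₂ is computed in ℤ/qℤ and gcd(x, q) means the gcd of any integer representative of x with q. -/
open Finset

lemma prime_term_bound (ε : ℝ) (hε : 0 < ε) (B : ℕ) (hB : (2:ℝ) ^ (1/ε) ≤ B)
    (p a : ℕ) (hp : 2 ≤ p) :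
    (a + 1 : ℝ) ≤ (if p ≤ B then max 1 (1/(ε * Real.log 2)) else 1) * (p:ℝ) ^ ((a:ℝ) * ε) := by
  have hlog2 : 0 < Real.log 2 := Real.log_pos (by norm_num)
  have hεlog : 0 < ε * Real.log 2 := by positivity
  set K := max 1 (1/(ε * Real.log 2)) with hKdef
  have hK1 : (1:ℝ) ≤ K := le_max_left _ _
  have hK2 : 1 ≤ K * (ε * Real.log 2) := by
    have := le_max_right 1 (1/(ε * Real.log 2))
    calc (1:ℝ) = (1/(ε * Real.log 2)) * (ε * Real.log 2) := by field_simp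
    _ ≤ K * (ε * Real.log 2) := by gcongr
  have h2a : (a + 1 : ℝ) ≤ (2:ℝ) ^ (a : ℕ) := by
    exact_mod_cast (Nat.lt_two_pow_self (n := a))
  by_cases hpb : p ≤ B
  · simp only [hpb, if_true]
    have hexp : (1 : ℝ) + Real.log 2 * ((a:ℝ) * ε) ≤ (2:ℝ) ^ ((a:ℝ) * ε) := by
      rw [Real.rpow_def_of_pos (by norm_num : (0:ℝ) < 2)]
      have := Real.add_one_le_exp (Real.log 2 * ((a:ℝ) * ε))
      linarith
    have hp2 : (2:ℝ) ^ ((a:ℝ) * ε) ≤ (p:ℝ) ^ ((a:ℝ) * ε) := by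
      apply Real.rpow_le_rpow (by norm_num) (by exact_mod_cast hp) (by positivity)
    have key : (a + 1 : ℝ) ≤ K * (1 + Real.log 2 * ((a:ℝ) * ε)) := by
      have ha0 : (0:ℝ) ≤ (a:ℝ) := Nat.cast_nonneg a
      nlinarith [hK1, hK2, ha0]
    calc (a + 1 : ℝ) ≤ K * (1 + Real.log 2 * ((a:ℝ) * ε)) := key
    _ ≤ K * ((2:ℝ) ^ ((a:ℝ) * ε)) := by
        apply mul_le_mul_of_nonneg_left hexp (by linarith)
    _ ≤ K * (p:ℝ) ^ ((a:ℝ) * ε) := by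
        apply mul_le_mul_of_nonneg_left hp2 (by linarith)
  · simp only [hpb, if_false, one_mul]
    push_neg at hpb
    have hple : (2:ℝ) ^ (1/ε) ≤ (p:ℝ) := le_trans hB (by exact_mod_cast hpb.le)
    have h2p : (2:ℝ) ≤ (p:ℝ) ^ ε := by
      calc (2:ℝ) = ((2:ℝ) ^ (1/ε)) ^ ε := by
            rw [← Real.rpow_mul (by norm_num : (0:ℝ) ≤ 2), one_div,
              inv_mul_cancel₀ hε.ne', Real.rpow_one]
      _ ≤ (p:ℝ) ^ ε := Real.rpow_le_rpow (by positivity) hple hε.le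
    calc (a + 1 : ℝ) ≤ (2:ℝ) ^ (a:ℕ) := h2a
    _ ≤ ((p:ℝ) ^ ε) ^ (a:ℕ) := pow_le_pow_left₀ (by norm_num) h2p a
    _ = (p:ℝ) ^ ((a:ℝ) * ε) := by
        rw [← Real.rpow_natCast ((p:ℝ)^ε) a, ← Real.rpow_mul (Nat.cast_nonneg p), mul_comm]

lemma tau_le (ε : ℝ) (hε : 0 < ε) :
    ∃ C : ℝ, 0 < C ∧ ∀ q : ℕ, q ≠ 0 → (q.divisors.card : ℝ) ≤ C * (q:ℝ) ^ ε := by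
  set K := max 1 (1/(ε * Real.log 2)) with hKdef
  have hK1 : (1:ℝ) ≤ K := le_max_left _ _
  have hK0 : (0:ℝ) < K := lt_of_lt_of_le one_pos hK1
  set B := ⌈(2:ℝ) ^ (1/ε)⌉₊ with hBdef
  have hB : (2:ℝ) ^ (1/ε) ≤ B := Nat.le_ceil _
  refine ⟨K ^ (B+1), by positivity, ?_⟩
  intro q hq
  rw [Nat.card_divisors hq]
  push_cast
  have key : ∀ p ∈ q.primeFactors,
      ((q.factorization p : ℝ) + 1) ≤ (if p ≤ B then K else 1) * (p:ℝ) ^ ((q.factorization p : ℝ) * ε) :=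
    fun p hp => prime_term_bound ε hε B hB p _ (Nat.prime_of_mem_primeFactors hp).two_le
  have hprod_eq : ∏ p ∈ q.primeFactors, (p:ℝ) ^ ((q.factorization p : ℝ) * ε) = (q:ℝ) ^ ε := by
    have h1 : ∀ p ∈ q.primeFactors, (p:ℝ) ^ ((q.factorization p : ℝ) * ε)
        = ((p ^ (q.factorization p) : ℕ) : ℝ) ^ ε := by
      intro p hp
      rw [Real.rpow_mul (Nat.cast_nonneg p), Real.rpow_natCast]
      push_cast
      ring_nf
    rw [Finset.prod_congr rfl h1,
      Real.finset_prod_rpow _ _ (fun i _ => by positivity)]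
    congr 1
    rw [← Nat.cast_prod]
    congr 1
    rw [← Nat.prod_factorization_eq_prod_primeFactors]
    exact Nat.factorization_prod_pow_eq_self hq
  have hW : ∏ p ∈ q.primeFactors, (if p ≤ B then K else 1) ≤ K ^ (B + 1) := by
    rw [Finset.prod_ite, Finset.prod_const, Finset.prod_const, one_pow, mul_one]
    apply pow_le_pow_right₀ hK1
    calc #(Finset.filter (fun p => p ≤ B) q.primeFactors) ≤ #(Finset.range (B+1)) := by
          apply Finset.card_le_card
          intro p hp
          simp only [Finset.mem_filter] at hp
          exact Finset.mem_range.mpr (Nat.lt_succ_of_le hp.2)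
    _ = B + 1 := Finset.card_range _
  calc ∏ p ∈ q.primeFactors, ((q.factorization p : ℝ) + 1)
      ≤ ∏ p ∈ q.primeFactors, ((if p ≤ B then K else 1) * (p:ℝ) ^ ((q.factorization p : ℝ) * ε)) :=
        Finset.prod_le_prod (fun i _ => by positivity) key
    _ = (∏ p ∈ q.primeFactors, (if p ≤ B then K else 1))
        * ∏ p ∈ q.primeFactors, (p:ℝ) ^ ((q.factorization p : ℝ) * ε) := Finset.prod_mul_distrib
    _ ≤ K ^ (B+1) * (q:ℝ) ^ ε := by
        rw [hprod_eq]
        exact mul_le_mul_of_nonneg_right hW (Real.rpow_nonneg (Nat.cast_nonneg q) ε)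
open Finset

lemma fiber_card_le {q d : ℕ} [NeZero q] (hd : d ∣ q) (hd0 : d ≠ 0) (c : ZMod d) :
    #(Finset.univ.filter (fun x : ZMod q => (ZMod.castHom hd (ZMod d)) x = c)) ≤ q / d := by
  haveI : NeZero d := ⟨hd0⟩
  set f := ZMod.castHom hd (ZMod d) with hf
  have hsurj : Function.Surjective f := fun b =>
    ⟨((b.val : ℕ) : ZMod q), by rw [map_natCast, ZMod.natCast_rightInverse b]⟩
  have hconst : ∀ c' : ZMod d,
      #(Finset.univ.filter (fun x : ZMod q => f x = c'))
        = #(Finset.univ.filter (fun x : ZMod q => f x = c)) := by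
    intro c'
    obtain ⟨x', hx'⟩ := hsurj c'
    obtain ⟨x0, hx0⟩ := hsurj c
    apply Finset.card_nbij' (fun a => a - x' + x0) (fun a => a - x0 + x')
    · intro a ha
      simp only [Finset.mem_coe, Finset.mem_filter, Finset.mem_univ, true_and] at ha ⊢
      rw [map_add, map_sub, ha, hx', hx0]
      ring
    · intro a ha
      simp only [Finset.mem_coe, Finset.mem_filter, Finset.mem_univ, true_and] at ha ⊢
      rw [map_add, map_sub, ha, hx', hx0]
      ring
    · intro a _; ring
    · intro a _; ring
  have total : ∑ c' : ZMod d, #(Finset.univ.filter (fun x : ZMod q => f x = c')) = q := by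
    rw [← Finset.card_eq_sum_card_fiberwise (fun x _ => Finset.mem_univ (f x))]
    simp [ZMod.card]
  have hmul : #(Finset.univ.filter (fun x : ZMod q => f x = c)) * d ≤ q := by
    have : ∑ c' : ZMod d, #(Finset.univ.filter (fun x : ZMod q => f x = c'))
        = d * #(Finset.univ.filter (fun x : ZMod q => f x = c)) := by
      rw [Finset.sum_congr rfl (fun c' _ => hconst c'), Finset.sum_const, Finset.card_univ,
        ZMod.card, smul_eq_mul]
    rw [this, mul_comm] at total
    omega
  exact (Nat.le_div_iff_mul_le (Nat.pos_of_ne_zero hd0)).mpr hmul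

lemma count_le {q : ℕ} [NeZero q] (s : Finset (ZMod q)ˣ) (a₁ : (ZMod q)ˣ) {d : ℕ}
    (hd : d ∣ q) (hd0 : d ≠ 0) :
    #(s.filter (fun a₂ : (ZMod q)ˣ => Nat.gcd (((a₁ : ZMod q) - (a₂ : ZMod q)).val) q = d)) ≤ q / d := by
  haveI : NeZero d := ⟨hd0⟩
  refine le_trans (Finset.card_le_card_of_injOn (fun a₂ : (ZMod q)ˣ => (a₂ : ZMod q)) ?_ ?_)
    (fiber_card_le hd hd0 ((ZMod.castHom hd (ZMod d)) (a₁ : ZMod q)))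
  · intro a₂ ha₂
    simp only [Finset.mem_coe, Finset.mem_filter, Finset.mem_univ, true_and] at ha₂ ⊢
    obtain ⟨-, hg⟩ := ha₂
    have h1 : d ∣ (((a₁ : ZMod q) - (a₂ : ZMod q))).val := hg ▸ Nat.gcd_dvd_left _ _
    have h2 : (ZMod.castHom hd (ZMod d)) ((a₁ : ZMod q) - (a₂ : ZMod q)) = 0 := by
      rw [ZMod.castHom_apply, ← ZMod.natCast_val, ZMod.natCast_eq_zero_iff]
      exact h1
    rw [map_sub, sub_eq_zero] at h2
    exact h2.symm
  · intro x _ y _ hxy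
    exact Units.ext hxy

set_option maxHeartbeats 1000000 in
/-- For a subgroup `H ≤ (ℤ/qℤ)ˣ`,
`Σ_{a₁,a₂ ∈ H} gcd(a₁ − a₂, q)^{1/2} ≪_ε |H|^{3/2} q^{1/2+ε}`. -/
theorem stmt_4 (ε : ℝ) (hε : 0 < ε) :
    ∃ C : ℝ, 0 < C ∧ ∀ (q : ℕ), 2 ≤ q → ∀ (H : Subgroup (ZMod q)ˣ),
      (∑ᶠ a₁ ∈ (H : Set (ZMod q)ˣ), ∑ᶠ a₂ ∈ (H : Set (ZMod q)ˣ),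
          (Nat.gcd ((((a₁ : (ZMod q)ˣ) : ZMod q) - ((a₂ : (ZMod q)ˣ) : ZMod q)).val) q : ℝ)
            ^ ((1 : ℝ) / 2))
        ≤ C * (Nat.card H : ℝ) ^ ((3 : ℝ) / 2) * (q : ℝ) ^ ((1 : ℝ) / 2 + ε) := by
  classical
  obtain ⟨C, hC0, htau⟩ := tau_le ε hε
  refine ⟨C, hC0, ?_⟩
  intro q hq H
  haveI : NeZero q := ⟨by omega⟩
  set s : Finset (ZMod q)ˣ := (H : Set (ZMod q)ˣ).toFinset with hs
  clear_value s
  have hfin : ∀ F : (ZMod q)ˣ → ℝ, ∑ᶠ a ∈ (H : Set (ZMod q)ˣ), F a = ∑ a ∈ s, F a := by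
    intro F
    have hcoe : ((s : Finset (ZMod q)ˣ) : Set (ZMod q)ˣ) = (H : Set (ZMod q)ˣ) := by
      rw [hs]; exact Set.coe_toFinset _
    rw [← hcoe, finsum_mem_coe_finset]
  have hscard : s.card = Nat.card H := by
    rw [hs, Set.toFinset_card, ← Nat.card_eq_fintype_card]
    exact Nat.card_congr (Equiv.refl _)
  have hs1 : 1 ≤ s.card := by
    rw [hscard]
    exact Nat.one_le_iff_ne_zero.mpr (Nat.card_ne_zero.mpr ⟨⟨1, H.one_mem⟩, inferInstance⟩)
  -- inner bound
  have inner : ∀ a₁ : (ZMod q)ˣ,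
      ∑ a₂ ∈ s, ((Nat.gcd (((a₁ : ZMod q) - (a₂ : ZMod q)).val) q : ℝ)) ^ ((1:ℝ)/2)
        ≤ (q.divisors.card : ℝ) * (s.card : ℝ) ^ ((1:ℝ)/2) * (q:ℝ) ^ ((1:ℝ)/2) := by
    intro a₁
    have hmaps : ∀ a₂ ∈ s, Nat.gcd (((a₁ : ZMod q) - (a₂ : ZMod q)).val) q ∈ q.divisors :=
      fun a₂ _ => Nat.mem_divisors.mpr ⟨Nat.gcd_dvd_right _ _, NeZero.ne q⟩
    rw [← Finset.sum_fiberwise_of_maps_to hmaps]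
    have hterm : ∀ d ∈ q.divisors,
        ∑ a₂ ∈ s.filter (fun a₂ : (ZMod q)ˣ => Nat.gcd (((a₁ : ZMod q) - (a₂ : ZMod q)).val) q = d),
          ((Nat.gcd (((a₁ : ZMod q) - (a₂ : ZMod q)).val) q : ℝ)) ^ ((1:ℝ)/2)
        ≤ (s.card : ℝ) ^ ((1:ℝ)/2) * (q:ℝ) ^ ((1:ℝ)/2) := by
      intro d hd
      obtain ⟨hdvd, -⟩ := Nat.mem_divisors.mp hd
      have hd0 : d ≠ 0 := Nat.pos_of_mem_divisors hd |>.ne'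
      set N := #(s.filter (fun a₂ : (ZMod q)ˣ => Nat.gcd (((a₁ : ZMod q) - (a₂ : ZMod q)).val) q = d)) with hN
      have hsum_eq : ∑ a₂ ∈ s.filter (fun a₂ : (ZMod q)ˣ => Nat.gcd (((a₁ : ZMod q) - (a₂ : ZMod q)).val) q = d),
          ((Nat.gcd (((a₁ : ZMod q) - (a₂ : ZMod q)).val) q : ℝ)) ^ ((1:ℝ)/2)
          = (N : ℝ) * (d : ℝ) ^ ((1:ℝ)/2) := by
        rw [Finset.sum_congr rfl (fun a₂ ha₂ => by
          rw [(Finset.mem_filter.mp ha₂).2]), Finset.sum_const, nsmul_eq_mul]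
      rw [hsum_eq]
      have hN1 : N ≤ s.card := Finset.card_filter_le _ _
      have hN2 : N ≤ q / d := count_le s a₁ hdvd hd0
      have hNsplit : (N : ℝ) = (N : ℝ) ^ ((1:ℝ)/2) * (N : ℝ) ^ ((1:ℝ)/2) := by
        rw [← Real.rpow_add' (Nat.cast_nonneg N) (by norm_num : (1:ℝ)/2 + 1/2 ≠ 0)]
        norm_num
      have hqd : ((q / d : ℕ) : ℝ) * (d : ℝ) = (q : ℝ) := by
        rw [← Nat.cast_mul, Nat.div_mul_cancel hdvd]
      calc (N : ℝ) * (d : ℝ) ^ ((1:ℝ)/2)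
          = (N : ℝ) ^ ((1:ℝ)/2) * ((N : ℝ) ^ ((1:ℝ)/2) * (d : ℝ) ^ ((1:ℝ)/2)) := by
            rw [← mul_assoc, ← hNsplit]
        _ ≤ (s.card : ℝ) ^ ((1:ℝ)/2) * (((q / d : ℕ) : ℝ) ^ ((1:ℝ)/2) * (d : ℝ) ^ ((1:ℝ)/2)) := by
            have h1' : (N:ℝ) ^ ((1:ℝ)/2) ≤ (s.card:ℝ) ^ ((1:ℝ)/2) := by
              exact Real.rpow_le_rpow (Nat.cast_nonneg _) (by exact_mod_cast hN1) (by norm_num)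
            have h2' : (N:ℝ) ^ ((1:ℝ)/2) ≤ ((q/d : ℕ):ℝ) ^ ((1:ℝ)/2) := by
              exact Real.rpow_le_rpow (Nat.cast_nonneg _) (by exact_mod_cast hN2) (by norm_num)
            have hdn : (0:ℝ) ≤ (d:ℝ) ^ ((1:ℝ)/2) := Real.rpow_nonneg (Nat.cast_nonneg d) _
            exact mul_le_mul h1' (mul_le_mul h2' le_rfl hdn (Real.rpow_nonneg (Nat.cast_nonneg _) _))
              (mul_nonneg (Real.rpow_nonneg (Nat.cast_nonneg _) _) hdn)
              (Real.rpow_nonneg (Nat.cast_nonneg _) _)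
        _ = (s.card : ℝ) ^ ((1:ℝ)/2) * (q : ℝ) ^ ((1:ℝ)/2) := by
            rw [← Real.mul_rpow (Nat.cast_nonneg _) (Nat.cast_nonneg _), hqd]
    calc ∑ d ∈ q.divisors, ∑ a₂ ∈ s.filter (fun a₂ : (ZMod q)ˣ => Nat.gcd (((a₁ : ZMod q) - (a₂ : ZMod q)).val) q = d),
          ((Nat.gcd (((a₁ : ZMod q) - (a₂ : ZMod q)).val) q : ℝ)) ^ ((1:ℝ)/2)
        ≤ ∑ _d ∈ q.divisors, (s.card : ℝ) ^ ((1:ℝ)/2) * (q:ℝ) ^ ((1:ℝ)/2) :=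
          Finset.sum_le_sum hterm
      _ = (q.divisors.card : ℝ) * (s.card : ℝ) ^ ((1:ℝ)/2) * (q:ℝ) ^ ((1:ℝ)/2) := by
          rw [Finset.sum_const, nsmul_eq_mul, mul_assoc]
  -- assemble
  rw [hfin]
  have step1 : ∑ a₁ ∈ s, ∑ᶠ a₂ ∈ (H : Set (ZMod q)ˣ),
      ((Nat.gcd (((a₁ : ZMod q) - (a₂ : ZMod q)).val) q : ℝ)) ^ ((1:ℝ)/2)
      = ∑ a₁ ∈ s, ∑ a₂ ∈ s,
      ((Nat.gcd (((a₁ : ZMod q) - (a₂ : ZMod q)).val) q : ℝ)) ^ ((1:ℝ)/2) :=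
    Finset.sum_congr rfl (fun a₁ _ => hfin _)
  rw [step1]
  have hq0 : (0:ℝ) < (q:ℝ) := by positivity
  have hsc0 : (0:ℝ) < (s.card : ℝ) := by exact_mod_cast hs1
  have step2 : ∑ a₁ ∈ s, ∑ a₂ ∈ s,
      ((Nat.gcd (((a₁ : ZMod q) - (a₂ : ZMod q)).val) q : ℝ)) ^ ((1:ℝ)/2)
      ≤ (s.card : ℝ) * ((q.divisors.card : ℝ) * (s.card : ℝ) ^ ((1:ℝ)/2) * (q:ℝ) ^ ((1:ℝ)/2)) := by
    calc ∑ a₁ ∈ s, ∑ a₂ ∈ s,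
        ((Nat.gcd (((a₁ : ZMod q) - (a₂ : ZMod q)).val) q : ℝ)) ^ ((1:ℝ)/2)
        ≤ ∑ _a₁ ∈ s, ((q.divisors.card : ℝ) * (s.card : ℝ) ^ ((1:ℝ)/2) * (q:ℝ) ^ ((1:ℝ)/2)) :=
          Finset.sum_le_sum (fun a₁ _ => inner a₁)
      _ = (s.card : ℝ) * ((q.divisors.card : ℝ) * (s.card : ℝ) ^ ((1:ℝ)/2) * (q:ℝ) ^ ((1:ℝ)/2)) := by
          rw [Finset.sum_const, nsmul_eq_mul]
  refine le_trans step2 ?_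
  have h32 : (s.card : ℝ) * (s.card : ℝ) ^ ((1:ℝ)/2) = (s.card : ℝ) ^ ((3:ℝ)/2) := by
    rw [show (3:ℝ)/2 = 1 + 1/2 by norm_num, Real.rpow_add hsc0, Real.rpow_one]
  have hqe : (q:ℝ) ^ ((1:ℝ)/2) * (q:ℝ) ^ ε = (q:ℝ) ^ ((1:ℝ)/2 + ε) := by
    rw [Real.rpow_add hq0]
  have htau' : (q.divisors.card : ℝ) ≤ C * (q:ℝ) ^ ε := htau q (NeZero.ne q)
  calc (s.card : ℝ) * ((q.divisors.card : ℝ) * (s.card : ℝ) ^ ((1:ℝ)/2) * (q:ℝ) ^ ((1:ℝ)/2))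
      ≤ (s.card : ℝ) * ((C * (q:ℝ) ^ ε) * (s.card : ℝ) ^ ((1:ℝ)/2) * (q:ℝ) ^ ((1:ℝ)/2)) := by
        gcongr
    _ = C * ((s.card : ℝ) ^ ((3:ℝ)/2)) * ((q:ℝ) ^ ((1:ℝ)/2 + ε)) := by
        rw [← h32, ← hqe]
        ring
    _ = C * (Nat.card H : ℝ) ^ ((3:ℝ)/2) * (q:ℝ) ^ ((1:ℝ)/2 + ε) := by
        rw [hscard]
end

section
/- Let f be a multiplicative arithmetic function given on prime powers by Hecke eigenvalues λ(n) of the weight-2 Eisenstein series, i.e. λ(n) = σ₁(n)/n^{1/2} where σ₁(n) = Σ_{d|n} d. For a Dirichlet character χ mod q′ and an integer q = p^m (p prime, m ≥ 1), define ν(χ, p^m) := σ₁(p^m) − σ₁(p^{m−1})(χ(p) + χ̄(p)) + σ₁(p^{m−2})|χ(p)|², with the convention σ₁(p^{−1}) = 0. Then ν(χ, p^m) = (p^{m−1}|p − χ(p)|² − |1 − χ(p)|²)/(p − 1), and in particular ν(χ, p^m) is a nonnegative real number with ν(χ, p^m) ≥ φ(p^m) = p^{m−1}(p−1). -/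
/-- For the weight-2 Eisenstein local weights, with `z = χ(p)` of modulus 0 or 1,
`ν(χ, p^m) = σ₁(p^m) − σ₁(p^{m−1})(z + z̄) + σ₁(p^{m−2})|z|²`
equals `(p^{m−1}|p − z|² − |1 − z|²)/(p − 1)`, is real, and is at least `φ(p^m)`. -/
theorem stmt_5 (p m : ℕ) (hp : p.Prime) (hm : 1 ≤ m) (z : ℂ)
    (hz : ‖z‖ = 0 ∨ ‖z‖ = 1) :
    (((∑ d ∈ (p ^ m).divisors, d : ℕ) : ℂ)
        - ((∑ d ∈ (p ^ (m - 1)).divisors, d : ℕ) : ℂ) * (z + (starRingEnd ℂ) z)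
        + (if m = 1 then 0 else ((∑ d ∈ (p ^ (m - 2)).divisors, d : ℕ) : ℂ))
            * (Complex.normSq z : ℂ))
      = ((p : ℂ) ^ (m - 1) * (Complex.normSq ((p : ℂ) - z) : ℂ)
          - (Complex.normSq (1 - z) : ℂ)) / ((p : ℂ) - 1) ∧
    (((∑ d ∈ (p ^ m).divisors, d : ℕ) : ℂ)
        - ((∑ d ∈ (p ^ (m - 1)).divisors, d : ℕ) : ℂ) * (z + (starRingEnd ℂ) z)
        + (if m = 1 then 0 else ((∑ d ∈ (p ^ (m - 2)).divisors, d : ℕ) : ℂ))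
            * (Complex.normSq z : ℂ)).im = 0 ∧
    (Nat.totient (p ^ m) : ℝ) ≤
      (((∑ d ∈ (p ^ m).divisors, d : ℕ) : ℂ)
        - ((∑ d ∈ (p ^ (m - 1)).divisors, d : ℕ) : ℂ) * (z + (starRingEnd ℂ) z)
        + (if m = 1 then 0 else ((∑ d ∈ (p ^ (m - 2)).divisors, d : ℕ) : ℂ))
            * (Complex.normSq z : ℂ)).re := by
  obtain ⟨n, rfl⟩ := Nat.exists_eq_add_of_le' hm
  have hp2 : 2 ≤ p := hp.two_le
  have hp1R : (1:ℝ) < p := by exact_mod_cast hp.one_lt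
  have hpc : (p:ℂ) - 1 ≠ 0 := by
    have : (p:ℂ) ≠ 1 := by exact_mod_cast hp.one_lt.ne'
    exact sub_ne_zero.mpr this
  have hS : ∀ k, ((∑ d ∈ (p ^ k).divisors, d : ℕ) : ℂ) * ((p:ℂ) - 1)
      = (p:ℂ) ^ (k+1) - 1 := by
    intro k
    have : ((∑ d ∈ (p ^ k).divisors, d : ℕ) : ℂ)
        = ∑ i ∈ Finset.range (k+1), (p:ℂ)^i := by
      rw [Nat.sum_divisors_prime_pow hp]; push_cast; rfl
    rw [this, geom_sum_mul]
  -- first conjunct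
  have key : (((∑ d ∈ (p ^ (n+1)).divisors, d : ℕ) : ℂ)
        - ((∑ d ∈ (p ^ (n+1 - 1)).divisors, d : ℕ) : ℂ) * (z + (starRingEnd ℂ) z)
        + (if n+1 = 1 then 0 else ((∑ d ∈ (p ^ (n+1 - 2)).divisors, d : ℕ) : ℂ))
            * (Complex.normSq z : ℂ))
      = ((p : ℂ) ^ (n+1 - 1) * (Complex.normSq ((p : ℂ) - z) : ℂ)
          - (Complex.normSq (1 - z) : ℂ)) / ((p : ℂ) - 1) := by
    rw [eq_div_iff hpc, ← Complex.mul_conj ((p:ℂ) - z), ← Complex.mul_conj (1 - z),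
      ← Complex.mul_conj z]
    simp only [map_sub, map_one, Complex.conj_natCast]
    rcases n with _ | k
    · rw [show (0:ℕ)+1 = 1 from rfl, show (1:ℕ)-1 = 0 from rfl, if_pos rfl, zero_mul,
        add_zero]
      linear_combination hS 1 - (z + (starRingEnd ℂ) z) * hS 0
    · rw [show k+1+1-1 = k+1 from rfl, show k+1+1-2 = k from rfl,
        if_neg (by omega : ¬ k + 1 + 1 = 1)]
      linear_combination hS (k+1+1) - (z + (starRingEnd ℂ) z) * hS (k+1)
        + (z * (starRingEnd ℂ) z) * hS k
  have keyR : (((∑ d ∈ (p ^ (n+1)).divisors, d : ℕ) : ℂ)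
        - ((∑ d ∈ (p ^ (n+1 - 1)).divisors, d : ℕ) : ℂ) * (z + (starRingEnd ℂ) z)
        + (if n+1 = 1 then 0 else ((∑ d ∈ (p ^ (n+1 - 2)).divisors, d : ℕ) : ℂ))
            * (Complex.normSq z : ℂ))
      = ((((p:ℝ) ^ n * Complex.normSq ((p : ℂ) - z) - Complex.normSq (1 - z))
          / ((p:ℝ) - 1) : ℝ) : ℂ) := by
    rw [key]; push_cast [Nat.add_sub_cancel]; ring
  refine ⟨key, by rw [keyR]; exact Complex.ofReal_im _, ?_⟩
  rw [keyR, Complex.ofReal_re]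
  have htot : ((p ^ (n+1)).totient : ℝ) = (p:ℝ)^n * ((p:ℝ) - 1) := by
    rw [Nat.totient_prime_pow hp (Nat.succ_pos n), Nat.succ_sub_one, Nat.cast_mul,
      Nat.cast_pow, Nat.cast_sub hp.one_le, Nat.cast_one]
  rw [htot, le_div_iff₀ (by linarith : (0:ℝ) < (p:ℝ) - 1)]
  have hpow : (1:ℝ) ≤ (p:ℝ)^n := one_le_pow₀ hp1R.le
  simp only [Complex.normSq_apply, Complex.sub_re, Complex.sub_im, Complex.natCast_re,
    Complex.natCast_im, Complex.one_re, Complex.one_im, zero_sub, neg_mul, neg_neg]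
  rcases hz with h | h
  · have hz0 : z = 0 := by simpa using h
    subst hz0
    simp only [Complex.zero_re, Complex.zero_im, sub_zero, mul_zero]
    nlinarith
  · have ht : z.re ^ 2 + z.im ^ 2 = 1 := by
      have := Complex.sq_norm z
      rw [h] at this
      simp [Complex.normSq_apply] at this
      nlinarith [this]
    have ha : z.re ≤ 1 := by nlinarith [sq_nonneg z.im]
    nlinarith [mul_nonneg (sub_nonneg.mpr ha) (sub_nonneg.mpr hpow),
      sq_nonneg z.im]
end

section
/- Let q ≥ 1 be an integer and for each prime power p^m ∥ q define ν(χ, p^m) = (p^{m−1}|p − χ(p)|² − |1 − χ(p)|²)/(p − 1), and extend ν(χ, ·) multiplicatively to ν(χ, q) = Π_{p^m ∥ q} ν(χ, p^m). Then ν(χ, q) ≥ φ(q) for every Dirichlet character χ. -/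
lemma key_ineq (p : ℝ) (t : ℝ) (r i : ℝ) (hp : 2 ≤ p) (ht : 1 ≤ t)
    (hs : r ^ 2 + i ^ 2 ≤ 1) :
    t * (p - 1) ^ 2 ≤ t * ((p - r) ^ 2 + i ^ 2) - ((1 - r) ^ 2 + i ^ 2) := by
  have hr : r ≤ 1 := by nlinarith [sq_nonneg i]
  have hA : 0 ≤ (p - r) ^ 2 + i ^ 2 - (p - 1) ^ 2 := by nlinarith
  nlinarith [mul_nonneg (sub_nonneg.2 ht) hA]

/-- The multiplicative Eisenstein weight
`ν(χ, q) = Π_{p^m ∥ q} (p^{m−1}|p − χ(p)|² − |1 − χ(p)|²)/(p − 1)` satisfies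
`ν(χ, q) ≥ φ(q)`, for any character values `χ(p)` of modulus 0 or 1 at the primes. -/
theorem stmt_6 (q : ℕ) (hq : 1 ≤ q) (z : ℕ → ℂ)
    (hz : ∀ p : ℕ, p.Prime → ‖z p‖ = 0 ∨ ‖z p‖ = 1) :
    (Nat.totient q : ℝ) ≤
      ∏ p ∈ q.primeFactors,
        ((p : ℝ) ^ (q.factorization p - 1) * Complex.normSq ((p : ℂ) - z p)
            - Complex.normSq (1 - z p)) / ((p : ℝ) - 1) := by
  have hq0 : q ≠ 0 := by omega
  have htot : (Nat.totient q : ℝ) =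
      ∏ p ∈ q.primeFactors, (p : ℝ) ^ (q.factorization p - 1) * ((p : ℝ) - 1) := by
    rw [Nat.totient_eq_prod_factorization hq0, Finsupp.prod, Nat.support_factorization]
    push_cast
    refine Finset.prod_congr rfl fun p hp => ?_
    have hp2 : 2 ≤ p := (Nat.prime_of_mem_primeFactors hp).two_le
    push_cast [Nat.cast_sub (by omega : 1 ≤ p)]
    ring
  rw [htot]
  refine Finset.prod_le_prod (fun p hp => ?_) (fun p hp => ?_)
  · have hp2 : (2:ℝ) ≤ (p:ℝ) := by exact_mod_cast (Nat.prime_of_mem_primeFactors hp).two_le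
    have : (0:ℝ) ≤ ((p:ℝ))^(q.factorization p - 1) := by positivity
    nlinarith
  · have hpp := Nat.prime_of_mem_primeFactors hp
    have hp2 : (2 : ℝ) ≤ (p : ℝ) := by exact_mod_cast hpp.two_le
    have hm : 1 ≤ q.factorization p := (Nat.Prime.factorization_pos_of_dvd hpp hq0
      (Nat.dvd_of_mem_primeFactors hp))
    have ht : (1 : ℝ) ≤ (p : ℝ) ^ (q.factorization p - 1) :=
      one_le_pow₀ (by linarith)
    have hs : (z p).re ^ 2 + (z p).im ^ 2 ≤ 1 := by
      rcases hz p hpp with h | h <;>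
      · have := congrArg (· ^ 2) h
        simp only [Complex.sq_norm, Complex.normSq_apply] at this
        nlinarith [this]
    rw [le_div_iff₀ (by linarith)]
    have := key_ineq (p : ℝ) ((p : ℝ) ^ (q.factorization p - 1)) (z p).re (z p).im
      hp2 ht hs
    simp only [Complex.normSq_apply, Complex.sub_re, Complex.sub_im, Complex.natCast_re,
      Complex.natCast_im, Complex.one_re, Complex.one_im]
    nlinarith [this]
end
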